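/- arXiv:2409.10773 — 3 statements merged into one kernel-verified Lean document; each statement's English description precedes it below -/
import Mathlib

section
/- Let f : ℝ^d → ℝ be convex and L-Lipschitz in the ℓ2 norm, and let V be a random vector distributed as the standard multivariate normal truncated to the unit ℓ∞-ball. For ρ > 0 define f_ρ(x) = E[f(x + ρV)]. Then f(x) ≤ f_ρ(x) ≤ f(x) + (5/4) L ρ √d for all x. -/
open MeasureTheory Real Set
open scoped ENNReal NNReal

/-- Standard normal CDF. -/
noncomputable def stdNormalCDF (t : ℝ) : ℝ :=
  ∫ s in Set.Iic t, (2 * π) ^ (-(1:ℝ)/2) * Real.exp (-(s^2) / 2)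

noncomputable def tgsPhi (t : ℝ) : ℝ := (2 * π) ^ (-(1:ℝ)/2) * Real.exp (-(t^2) / 2)

lemma tgsPhi_pos (t : ℝ) : 0 < tgsPhi t := by
  unfold tgsPhi
  have h2 : (0:ℝ) < 2 * π := by positivity
  positivity

lemma tgsPhi_integrable : Integrable tgsPhi := by
  have h : Integrable (fun t : ℝ => Real.exp (-(1/2 : ℝ) * t^2)) :=
    integrable_exp_neg_mul_sq (by norm_num)
  have := h.const_mul ((2 * π) ^ (-(1:ℝ)/2))
  convert this using 2 with t
  unfold tgsPhi
  ring_nf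

lemma tgsPhi_continuous : Continuous tgsPhi := by
  unfold tgsPhi
  continuity

noncomputable def tgsZ : ℝ := stdNormalCDF 1 - stdNormalCDF (-1)

lemma tgsZ_eq : tgsZ = ∫ t in (-1:ℝ)..1, tgsPhi t := by
  unfold tgsZ stdNormalCDF
  exact intervalIntegral.integral_Iic_sub_Iic tgsPhi_integrable.integrableOn tgsPhi_integrable.integrableOn

lemma tgsZ_pos : 0 < tgsZ := by
  rw [tgsZ_eq]
  apply intervalIntegral.intervalIntegral_pos_of_pos
  · exact tgsPhi_integrable.intervalIntegrable
  · exact fun t => tgsPhi_pos t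
  · norm_num

noncomputable def tgsG (t : ℝ) : ℝ := Set.indicator (Icc (-1:ℝ) 1) (fun t => tgsZ⁻¹ * tgsPhi t) t

lemma tgsG_nonneg (t : ℝ) : 0 ≤ tgsG t := by
  unfold tgsG
  apply Set.indicator_nonneg
  intro t _
  exact mul_nonneg (inv_nonneg.mpr tgsZ_pos.le) (tgsPhi_pos t).le

lemma tgsG_measurable : Measurable tgsG :=
  ((measurable_const.mul tgsPhi_continuous.measurable).indicator measurableSet_Icc)

lemma tgsG_integrable : Integrable tgsG :=
  ((tgsPhi_integrable.const_mul _).indicator measurableSet_Icc)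

lemma tgsG_integral : ∫ t, tgsG t = 1 := by
  unfold tgsG
  rw [integral_indicator measurableSet_Icc, integral_const_mul,
    integral_Icc_eq_integral_Ioc,
    ← intervalIntegral.integral_of_le (by norm_num : (-1:ℝ) ≤ 1), ← tgsZ_eq]
  exact inv_mul_cancel₀ tgsZ_pos.ne'

lemma tgsG_neg (t : ℝ) : tgsG (-t) = tgsG t := by
  unfold tgsG
  have h : (-t) ∈ Icc (-1:ℝ) 1 ↔ t ∈ Icc (-1:ℝ) 1 := by
    simp only [mem_Icc]
    constructor <;> rintro ⟨h1, h2⟩ <;> constructor <;> linarith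
  by_cases ht : t ∈ Icc (-1:ℝ) 1
  · rw [indicator_of_mem (h.mpr ht), indicator_of_mem ht]
    unfold tgsPhi
    ring_nf
  · rw [indicator_of_notMem (fun hh => ht (h.mp hh)), indicator_of_notMem ht]

lemma tgs_norm_sq (d : ℕ) (v : EuclideanSpace ℝ (Fin d)) : ‖v‖^2 = ∑ i, (v i)^2 := by
  rw [EuclideanSpace.norm_eq, Real.sq_sqrt (by positivity)]
  simp [sq_abs]

lemma tgs_density_eq (d : ℕ) (v : EuclideanSpace ℝ (Fin d)) :
    Set.indicator {v : EuclideanSpace ℝ (Fin d) | ∀ i, |v i| ≤ 1}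
      (fun v => ((stdNormalCDF 1 - stdNormalCDF (-1)) ^ d)⁻¹ *
        (2 * π) ^ (-(d:ℝ)/2) * Real.exp (-(‖v‖^2) / 2)) v = ∏ i, tgsG (v i) := by
  rw [show stdNormalCDF 1 - stdNormalCDF (-1) = tgsZ from rfl]
  by_cases hv : v ∈ {v : EuclideanSpace ℝ (Fin d) | ∀ i, |v i| ≤ 1}
  · rw [Set.indicator_of_mem hv]
    have key : ∀ i, tgsG (v i) = tgsZ⁻¹ * tgsPhi (v i) := fun i =>
      Set.indicator_of_mem (mem_Icc.mpr (abs_le.mp (hv i))) _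
    simp only [key]
    unfold tgsPhi
    rw [Finset.prod_mul_distrib, Finset.prod_mul_distrib, Finset.prod_const, Finset.prod_const,
      ← Real.exp_sum]
    have h2 : (0:ℝ) ≤ 2 * π := by positivity
    have hpow : ((2 * π) ^ (-(1:ℝ)/2)) ^ d = (2 * π) ^ (-(d:ℝ)/2) := by
      rw [← Real.rpow_natCast ((2 * π) ^ (-(1:ℝ)/2)) d, ← Real.rpow_mul h2]
      congr 1
      ring
    have hsum : ∑ i, (-(v i ^ 2) / 2) = -(‖v‖^2)/2 := by
      rw [tgs_norm_sq]
      rw [← Finset.sum_div, ← Finset.sum_neg_distrib]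
    simp only [Finset.card_univ, Fintype.card_fin]
    rw [hpow, hsum, inv_pow]
    ring
  · rw [Set.indicator_of_notMem hv]
    simp only [mem_setOf_eq, not_forall, not_le] at hv
    obtain ⟨i, hi⟩ := hv
    refine (Finset.prod_eq_zero (Finset.mem_univ i) ?_).symm
    exact Set.indicator_of_notMem (fun hh => absurd (abs_le.mpr (mem_Icc.mp hh)) (not_le.mpr hi)) _

/-- The standard Gaussian on `ℝ^d` truncated to the unit ℓ∞-ball, as a measure. -/
noncomputable def truncGaussMeasure (d : ℕ) : Measure (EuclideanSpace ℝ (Fin d)) :=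
  volume.withDensity (fun v => ENNReal.ofReal
    (Set.indicator {v : EuclideanSpace ℝ (Fin d) | ∀ i, |v i| ≤ 1}
      (fun v => ((stdNormalCDF 1 - stdNormalCDF (-1)) ^ d)⁻¹ *
        (2 * π) ^ (-(d:ℝ)/2) * Real.exp (-(‖v‖^2) / 2)) v))

lemma tgs_eval_measurable (d : ℕ) (i : Fin d) :
    Measurable (fun v : EuclideanSpace ℝ (Fin d) => v i) :=
  (measurable_pi_apply i).comp (MeasurableEquiv.toLp 2 (Fin d → ℝ)).symm.measurable

lemma tgs_prod_measurable (d : ℕ) :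
    Measurable (fun v : EuclideanSpace ℝ (Fin d) => ∏ i, tgsG (v i)) :=
  Finset.measurable_prod _ (fun i _ => tgsG_measurable.comp (tgs_eval_measurable d i))

lemma tgs_integral {E : Type*} [NormedAddCommGroup E] [NormedSpace ℝ E] (d : ℕ)
    (h : EuclideanSpace ℝ (Fin d) → E) :
    ∫ v, h v ∂(truncGaussMeasure d) = ∫ v, (∏ i, tgsG (v i)) • h v := by
  unfold truncGaussMeasure
  have hd : (fun v : EuclideanSpace ℝ (Fin d) => ENNReal.ofReal
      (Set.indicator {v : EuclideanSpace ℝ (Fin d) | ∀ i, |v i| ≤ 1}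
        (fun v => ((stdNormalCDF 1 - stdNormalCDF (-1)) ^ d)⁻¹ *
          (2 * π) ^ (-(d:ℝ)/2) * Real.exp (-(‖v‖^2) / 2)) v))
      = fun v => (((∏ i, tgsG (v i)).toNNReal : ℝ≥0) : ℝ≥0∞) := by
    funext v
    rw [tgs_density_eq]
    rfl
  rw [hd, integral_withDensity_eq_integral_smul
    (f := fun v : EuclideanSpace ℝ (Fin d) => (∏ i, tgsG (v i)).toNNReal)
    ((tgs_prod_measurable d).real_toNNReal) h]
  congr 1
  funext v
  rw [NNReal.smul_def, Real.coe_toNNReal _ (Finset.prod_nonneg (fun i _ => tgsG_nonneg _))]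

lemma tgs_prod_integrable (d : ℕ) :
    Integrable (fun v : EuclideanSpace ℝ (Fin d) => ∏ i, tgsG (v i)) := by
  have e := EuclideanSpace.volume_preserving_symm_measurableEquiv_toLp (Fin d)
  rw [← MeasurePreserving.integrable_comp_emb e.symm (MeasurableEquiv.measurableEmbedding _)]
  have heq : ((fun v : EuclideanSpace ℝ (Fin d) => ∏ i, tgsG (v i)) ∘
      (MeasurableEquiv.toLp 2 (Fin d → ℝ)).symm.symm) = fun y : Fin d → ℝ => ∏ i, tgsG (y i) := rfl
  rw [heq]
  exact Integrable.fintype_prod (fun _ => tgsG_integrable)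

lemma tgs_prod_integral (d : ℕ) :
    ∫ v : EuclideanSpace ℝ (Fin d), ∏ i, tgsG (v i) = 1 := by
  have e := (EuclideanSpace.volume_preserving_symm_measurableEquiv_toLp (Fin d)).symm
  rw [← e.integral_comp (MeasurableEquiv.measurableEmbedding _)]
  have heq : ∀ y : Fin d → ℝ,
      (∏ i, tgsG (((MeasurableEquiv.toLp 2 (Fin d → ℝ)).symm.symm y) i)) = ∏ i, tgsG (y i) :=
    fun _ => rfl
  simp_rw [heq]
  rw [integral_fintype_prod_volume_eq_prod (fun _ => tgsG)]
  simp [tgsG_integral]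

instance tgs_isProb (d : ℕ) : IsProbabilityMeasure (truncGaussMeasure d) := by
  constructor
  unfold truncGaussMeasure
  rw [withDensity_apply _ MeasurableSet.univ, Measure.restrict_univ]
  have hd : ∀ v : EuclideanSpace ℝ (Fin d), ENNReal.ofReal
      (Set.indicator {v : EuclideanSpace ℝ (Fin d) | ∀ i, |v i| ≤ 1}
        (fun v => ((stdNormalCDF 1 - stdNormalCDF (-1)) ^ d)⁻¹ *
          (2 * π) ^ (-(d:ℝ)/2) * Real.exp (-(‖v‖^2) / 2)) v)
      = ENNReal.ofReal (∏ i, tgsG (v i)) := fun v => by rw [tgs_density_eq]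
  simp_rw [hd]
  rw [← ofReal_integral_eq_lintegral_ofReal (tgs_prod_integrable d)
    (Filter.Eventually.of_forall (fun v => Finset.prod_nonneg (fun i _ => tgsG_nonneg _)))]
  rw [tgs_prod_integral, ENNReal.ofReal_one]

lemma tgs_set_measurable (d : ℕ) :
    MeasurableSet {v : EuclideanSpace ℝ (Fin d) | ∀ i, |v i| ≤ 1} := by
  rw [Set.setOf_forall]
  exact MeasurableSet.iInter (fun i =>
    measurableSet_le (tgs_eval_measurable d i).abs measurable_const)

lemma tgs_ae_mem (d : ℕ) : ∀ᵐ v ∂(truncGaussMeasure d), ∀ i, |v i| ≤ 1 := by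
  rw [ae_iff]
  unfold truncGaussMeasure
  have hc : MeasurableSet {v : EuclideanSpace ℝ (Fin d) | ¬ ∀ i, |v i| ≤ 1} :=
    (tgs_set_measurable d).compl
  rw [withDensity_apply _ hc]
  rw [setLIntegral_congr_fun hc
    (fun v (hv : v ∈ _) => by
      rw [Set.indicator_of_notMem (by exact hv), ENNReal.ofReal_zero])]
  simp

lemma tgs_norm_le (d : ℕ) (v : EuclideanSpace ℝ (Fin d)) (hv : ∀ i, |v i| ≤ 1) :
    ‖v‖ ≤ Real.sqrt d := by
  rw [EuclideanSpace.norm_eq]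
  apply Real.sqrt_le_sqrt
  calc ∑ i, ‖v i‖^2 ≤ ∑ _i : Fin d, (1:ℝ) := by
        apply Finset.sum_le_sum
        intro i _
        have : ‖v i‖ ≤ 1 := by rw [Real.norm_eq_abs]; exact hv i
        calc ‖v i‖^2 ≤ 1^2 := pow_le_pow_left₀ (norm_nonneg _) this 2
        _ = 1 := one_pow 2
    _ = d := by simp

lemma tgs_mean_zero (d : ℕ) :
    ∫ v, v ∂(truncGaussMeasure d) = (0 : EuclideanSpace ℝ (Fin d)) := by
  rw [tgs_integral]
  set F : EuclideanSpace ℝ (Fin d) → EuclideanSpace ℝ (Fin d) :=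
    fun v => (∏ i, tgsG (v i)) • v with hF
  have hodd : ∀ v, F (-v) = -F v := by
    intro v
    simp only [hF]
    have : (∏ i, tgsG ((-v) i)) = ∏ i, tgsG (v i) := by
      apply Finset.prod_congr rfl
      intro i _
      have : (-v) i = -(v i) := rfl
      rw [this, tgsG_neg]
    rw [this, smul_neg]
  have h1 : ∫ v, F (-v) = ∫ v, F v := integral_neg_eq_self F volume
  have h2 : ∫ v, F (-v) = -∫ v, F v := by
    simp_rw [hodd]
    exact integral_neg F
  have h3 : ∫ v, F v = -∫ v, F v := h1.symm.trans h2
  have h4 : (2:ℝ) • ∫ v, F v = 0 := by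
    rw [two_smul]
    nth_rewrite 2 [h3]
    simp
  rcases smul_eq_zero.mp h4 with h | h
  · norm_num at h
  · exact h

/-- for convex `L`-Lipschitz `f`, smoothing with the ℓ∞-ball-truncated
Gaussian satisfies `f(x) ≤ f_ρ(x) ≤ f(x) + (5/4) L ρ √d`. -/
theorem truncated_gaussian_smoothing_bounds (d : ℕ) (L ρ : ℝ) (hL : 0 ≤ L) (hρ : 0 < ρ)
    (f : EuclideanSpace ℝ (Fin d) → ℝ)
    (hconv : ConvexOn ℝ Set.univ f) (hlip : LipschitzWith (Real.toNNReal L) f) :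
    ∀ x, f x ≤ (∫ v, f (x + ρ • v) ∂(truncGaussMeasure d)) ∧
      (∫ v, f (x + ρ • v) ∂(truncGaussMeasure d)) ≤ f x + 5/4 * L * ρ * Real.sqrt d := by
  intro x
  set μ := truncGaussMeasure d with hμ
  have hae : ∀ᵐ v ∂μ, ‖v‖ ≤ Real.sqrt d :=
    (tgs_ae_mem d).mono (fun v hv => tgs_norm_le d v hv)
  have hLcoe : ((Real.toNNReal L : ℝ≥0) : ℝ) = L := Real.coe_toNNReal L hL
  have hfcont : Continuous f := hlip.continuous
  have hacont : Continuous (fun v : EuclideanSpace ℝ (Fin d) => x + ρ • v) :=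
    continuous_const.add (continuous_const_smul ρ)
  -- integrability of the identity
  have hid : Integrable (fun v : EuclideanSpace ℝ (Fin d) => v) μ :=
    Integrable.mono' (integrable_const (Real.sqrt d)) continuous_id.aestronglyMeasurable hae
  have hvint : Integrable (fun v : EuclideanSpace ℝ (Fin d) => x + ρ • v) μ :=
    (integrable_const x).add (hid.smul ρ)
  have hexp : ∫ v, (x + ρ • v) ∂μ = x := by
    have h1 : ∫ v, (x + ρ • v) ∂μ = (∫ _v, x ∂μ) + ∫ v, ρ • v ∂μ :=
      integral_add (integrable_const x) (hid.smul ρ)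
    rw [h1, integral_const, probReal_univ, one_smul, integral_smul, hμ,
      tgs_mean_zero, smul_zero, add_zero]
  have hlipbound : ∀ v : EuclideanSpace ℝ (Fin d),
      |f (x + ρ • v) - f x| ≤ L * (ρ * ‖v‖) := by
    intro v
    have h := hlip.dist_le_mul (x + ρ • v) x
    rw [hLcoe] at h
    rw [← Real.dist_eq]
    calc dist (f (x + ρ • v)) (f x) ≤ L * dist (x + ρ • v) x := h
      _ = L * (ρ * ‖v‖) := by
          rw [dist_eq_norm]
          simp only [add_sub_cancel_left, norm_smul, Real.norm_eq_abs, abs_of_pos hρ]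
  have hfint : Integrable (fun v => f (x + ρ • v)) μ := by
    apply Integrable.mono' (integrable_const (|f x| + L * ρ * Real.sqrt d))
      ((hfcont.comp hacont).aestronglyMeasurable)
    filter_upwards [hae] with v hv
    simp only [Function.comp_apply]
    rw [Real.norm_eq_abs]
    have h1 : |f (x + ρ • v)| ≤ |f x| + |f (x + ρ • v) - f x| := by
      calc |f (x + ρ • v)| = |f x + (f (x + ρ • v) - f x)| := by ring_nf
        _ ≤ |f x| + |f (x + ρ • v) - f x| := abs_add_le _ _
    have h2 : L * (ρ * ‖v‖) ≤ L * ρ * Real.sqrt d := by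
      rw [mul_assoc]
      exact mul_le_mul_of_nonneg_left (mul_le_mul_of_nonneg_left hv hρ.le) hL
    linarith [hlipbound v]
  constructor
  · have hj := hconv.map_integral_le (hfcont.continuousOn) isClosed_univ
      (Filter.Eventually.of_forall (fun v => mem_univ _)) hvint
      (by exact hfint : Integrable (f ∘ (fun v => x + ρ • v)) μ)
    rw [hexp] at hj
    exact hj
  · have hub : ∀ᵐ v ∂μ, f (x + ρ • v) ≤ f x + L * ρ * Real.sqrt d := by
      filter_upwards [hae] with v hv
      have h2 : L * (ρ * ‖v‖) ≤ L * ρ * Real.sqrt d := by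
        rw [mul_assoc]
        exact mul_le_mul_of_nonneg_left (mul_le_mul_of_nonneg_left hv hρ.le) hL
      have := abs_le.mp (hlipbound v)
      linarith [this.2]
    calc ∫ v, f (x + ρ • v) ∂μ ≤ ∫ _v, (f x + L * ρ * Real.sqrt d) ∂μ :=
          integral_mono_ae hfint (integrable_const _) hub
      _ = f x + L * ρ * Real.sqrt d := by
          rw [integral_const, probReal_univ, one_smul]
      _ ≤ f x + 5/4 * L * ρ * Real.sqrt d := by
          have h0 : 0 ≤ L * ρ * Real.sqrt d := by positivity
          nlinarith
end

section
/- Let q ≥ 2, σ > 0, β > 0, T ∈ ℕ with T ≥ 1, and consider R(x) = β · max_{k ∈ [T]} ξ_k ⟨e_{α(k)}, x⟩ + (σ/q)‖x‖^q on ℝ^d with d ≥ T, where α is injective on [T] and ξ_k ∈ {−1,1}. Then min_x R(x) = −((q−1)/q) (β^q / (σ T^{q/2}))^{1/(q−1)}. -/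
open Real Set Finset

lemma young_aux {q σ b r : ℝ} (hq : 1 < q) (hσ : 0 < σ) (hb : 0 < b) (hr : 0 ≤ r) :
    -((q - 1) / q * (b ^ q / σ) ^ (1 / (q - 1))) ≤ -(b * r) + σ / q * r ^ q := by
  have hq0 : 0 < q := by linarith
  have hqm : 0 < q - 1 := by linarith
  have hpq : q.HolderConjugate (q / (q - 1)) := Real.HolderConjugate.conjExponent hq
  have hσq : 0 < σ ^ q⁻¹ := Real.rpow_pos_of_pos hσ _
  have key := Real.young_inequality_of_nonneg (a := σ ^ q⁻¹ * r) (b := b * (σ ^ q⁻¹)⁻¹)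
    (by positivity) (by positivity) hpq
  have h1 : σ ^ q⁻¹ * r * (b * (σ ^ q⁻¹)⁻¹) = b * r := by field_simp
  have h2 : (σ ^ q⁻¹ * r) ^ q = σ * r ^ q := by
    rw [Real.mul_rpow hσq.le hr, ← Real.rpow_mul hσ.le, inv_mul_cancel₀ hq0.ne', Real.rpow_one]
  have h3 : (b * (σ ^ q⁻¹)⁻¹) ^ (q / (q - 1)) = (b ^ q / σ) ^ (1 / (q - 1)) := by
    rw [← Real.rpow_neg_one (σ ^ q⁻¹), ← Real.rpow_mul hσ.le,
      Real.mul_rpow hb.le (Real.rpow_nonneg hσ.le _), ← Real.rpow_mul hσ.le,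
      Real.div_rpow (Real.rpow_nonneg hb.le _) hσ.le, ← Real.rpow_mul hb.le,
      eq_div_iff (Real.rpow_pos_of_pos hσ (1 / (q - 1))).ne', mul_assoc, ← Real.rpow_add hσ,
      show q⁻¹ * -1 * (q / (q - 1)) + 1 / (q - 1) = 0 by field_simp; ring, Real.rpow_zero, mul_one,
      mul_one_div]
  rw [h1, h2, h3] at key
  have h4 : (b ^ q / σ) ^ (1 / (q - 1)) / (q / (q - 1)) = (q - 1) / q * (b ^ q / σ) ^ (1 / (q - 1)) := by
    field_simp
  rw [h4] at key
  have h5 : σ / q * r ^ q = σ * r ^ q / q := by ring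
  linarith [h5]

/-- the minimum of `R(x) = β max_k ξ_k x_{α(k)} + (σ/q)‖x‖^q` equals
`-((q-1)/q) (β^q / (σ T^{q/2}))^{1/(q-1)}`. -/
theorem min_of_regularized_max (d T : ℕ) (hT : 0 < T) (hTd : T ≤ d)
    (q σ β : ℝ) (hq : 2 ≤ q) (hσ : 0 < σ) (hβ : 0 < β)
    (α : Fin T → Fin d) (hα : Function.Injective α)
    (ξ : Fin T → ℝ) (hξ : ∀ k, ξ k = 1 ∨ ξ k = -1)
    (R : EuclideanSpace ℝ (Fin d) → ℝ)
    (hR : ∀ x, R x = β * Finset.univ.sup'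
        (Finset.univ_nonempty_iff.mpr (Fin.pos_iff_nonempty.mp hT))
        (fun k : Fin T => ξ k * x (α k)) + σ / q * ‖x‖ ^ q) :
    IsLeast (Set.range R) (-((q - 1) / q * (β ^ q / (σ * (T : ℝ) ^ (q / 2))) ^ (1 / (q - 1)))) := by
  have hq1 : 1 < q := by linarith
  have hq0 : 0 < q := by linarith
  have hqm : 0 < q - 1 := by linarith
  have hN : (0:ℝ) < (T:ℝ) := by exact_mod_cast hT
  have hTq : (0:ℝ) < (T:ℝ) ^ (q/2) := Real.rpow_pos_of_pos hN _
  have hsT : Real.sqrt T ^ q = (T:ℝ) ^ (q/2) := by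
    rw [Real.sqrt_eq_rpow, ← Real.rpow_mul hN.le]
    congr 1; ring
  constructor
  · -- membership: the minimizer
    have hA : 0 < β / (σ * (T:ℝ) ^ (q/2)) := by positivity
    set A := β / (σ * (T:ℝ) ^ (q/2)) with hAdef
    set γ := A ^ (1/(q-1)) with hγdef
    have hγ : 0 < γ := Real.rpow_pos_of_pos hA _
    have hγq1 : γ ^ (q-1) = A := by
      rw [hγdef, ← Real.rpow_mul hA.le, one_div, inv_mul_cancel₀ hqm.ne', Real.rpow_one]
    set x₀ : EuclideanSpace ℝ (Fin d) :=
      WithLp.toLp 2 (fun i => ∑ k : Fin T, if α k = i then -(ξ k * γ) else 0) with hx₀def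
    refine ⟨x₀, ?_⟩
    have hx₀ : ∀ k, x₀ (α k) = -(ξ k * γ) := by
      intro k
      show (∑ k' : Fin T, if α k' = α k then -(ξ k' * γ) else 0) = -(ξ k * γ)
      rw [Finset.sum_eq_single_of_mem k (Finset.mem_univ k)
        (fun k' _ hk' => if_neg fun h => hk' (hα h)), if_pos rfl]
    have hξsq : ∀ k, ξ k * ξ k = 1 := by
      intro k; rcases hξ k with h | h <;> rw [h] <;> norm_num
    have hsup : Finset.univ.sup'
        (Finset.univ_nonempty_iff.mpr (Fin.pos_iff_nonempty.mp hT))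
        (fun k : Fin T => ξ k * x₀ (α k)) = -γ := by
      rw [show (fun k : Fin T => ξ k * x₀ (α k)) = fun _ => -γ from funext fun k => by
        rw [hx₀ k, mul_neg, ← mul_assoc, hξsq k, one_mul]]
      exact Finset.sup'_const _ _
    have hsum : ∑ i, x₀ i ^ 2 = (T:ℝ) * γ ^ 2 := by
      have hpt : ∀ i, x₀ i ^ 2 = ∑ k : Fin T, if α k = i then γ ^ 2 else 0 := by
        intro i
        by_cases h : ∃ k, α k = i
        · obtain ⟨k, hk⟩ := h
          rw [← hk, hx₀ k, Finset.sum_eq_single_of_mem k (Finset.mem_univ k)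
            (fun k' _ hk' => if_neg fun hh => hk' (hα hh)), if_pos rfl]
          have := hξsq k; nlinarith [hξsq k]
        · have h0 : x₀ i = 0 := by
            show (∑ k : Fin T, if α k = i then -(ξ k * γ) else 0) = 0
            exact Finset.sum_eq_zero fun k _ => if_neg fun hk => h ⟨k, hk⟩
          rw [h0, Finset.sum_eq_zero fun k _ => if_neg fun hk => h ⟨k, hk⟩]
          ring
      simp_rw [hpt]
      rw [Finset.sum_comm]
      simp [Finset.sum_ite_eq, mul_comm]
    have hnorm : ‖x₀‖ = Real.sqrt T * γ := by
      rw [EuclideanSpace.norm_eq]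
      simp_rw [Real.norm_eq_abs, sq_abs]
      rw [hsum, Real.sqrt_mul hN.le, Real.sqrt_sq hγ.le]
    have hnq : ‖x₀‖ ^ q = (T:ℝ) ^ (q/2) * γ ^ q := by
      rw [hnorm, Real.mul_rpow (Real.sqrt_nonneg _) hγ.le, hsT]
    have hγq : γ ^ q = A * γ := by
      rw [show q = (q-1) + 1 by ring, Real.rpow_add hγ, hγq1, Real.rpow_one]
    have hβγ : β * γ = (β ^ q / (σ * (T:ℝ) ^ (q/2))) ^ (1/(q-1)) := by
      have hb : β = (β ^ (q-1)) ^ (1/(q-1)) := by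
        rw [← Real.rpow_mul hβ.le, mul_one_div, div_self hqm.ne', Real.rpow_one]
      conv_lhs => rw [hb, hγdef]
      rw [← Real.mul_rpow (Real.rpow_nonneg hβ.le _) hA.le, hAdef]
      congr 1
      rw [show q = (q-1) + 1 by ring, Real.rpow_add hβ, Real.rpow_one]
      ring
    rw [hR, hsup, hnq, hγq, ← hβγ, hAdef]
    field_simp
    ring
  · -- lower bound
    rintro y ⟨x, rfl⟩
    rw [hR]
    set S := Finset.univ.sup'
        (Finset.univ_nonempty_iff.mpr (Fin.pos_iff_nonempty.mp hT))
        (fun k : Fin T => ξ k * x (α k)) with hSdef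
    have hxsq : ∑ k : Fin T, x (α k) ^ 2 ≤ ‖x‖ ^ 2 := by
      have h1 : ∑ i ∈ Finset.univ.image α, x i ^ 2 = ∑ k : Fin T, x (α k) ^ 2 :=
        Finset.sum_image (fun k _ k' _ h => hα h)
      have h2 : ∑ i ∈ Finset.univ.image α, x i ^ 2 ≤ ∑ i, x i ^ 2 :=
        Finset.sum_le_sum_of_subset_of_nonneg (Finset.subset_univ _)
          (fun i _ _ => sq_nonneg _)
      have h3 : ∑ i, x i ^ 2 = ‖x‖ ^ 2 := by
        rw [EuclideanSpace.norm_eq, Real.sq_sqrt (by positivity)]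
        simp [Real.norm_eq_abs, sq_abs]
      linarith
    have hCS : (∑ k : Fin T, ξ k * x (α k)) ^ 2 ≤ (T:ℝ) * ‖x‖ ^ 2 := by
      calc (∑ k : Fin T, ξ k * x (α k)) ^ 2
          ≤ (∑ k : Fin T, ξ k ^ 2) * ∑ k : Fin T, x (α k) ^ 2 :=
            Finset.sum_mul_sq_le_sq_mul_sq _ _ _
        _ = (T:ℝ) * ∑ k : Fin T, x (α k) ^ 2 := by
            congr 1
            rw [Finset.sum_congr rfl (fun k _ => by rcases hξ k with h | h <;> rw [h] <;> norm_num)]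
            simp [Finset.sum_const, Finset.card_univ]
        _ ≤ (T:ℝ) * ‖x‖ ^ 2 := mul_le_mul_of_nonneg_left hxsq hN.le
    have hlow : -(Real.sqrt T * ‖x‖) ≤ ∑ k : Fin T, ξ k * x (α k) := by
      have habs : |∑ k : Fin T, ξ k * x (α k)| ≤ Real.sqrt T * ‖x‖ := by
        rw [← Real.sqrt_sq_eq_abs]
        calc Real.sqrt ((∑ k : Fin T, ξ k * x (α k)) ^ 2)
            ≤ Real.sqrt ((T:ℝ) * ‖x‖ ^ 2) := Real.sqrt_le_sqrt hCS
          _ = Real.sqrt T * ‖x‖ := by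
              rw [Real.sqrt_mul hN.le, Real.sqrt_sq (norm_nonneg _)]
      linarith [neg_abs_le (∑ k : Fin T, ξ k * x (α k))]
    have hsupS : ∑ k : Fin T, ξ k * x (α k) ≤ (T:ℝ) * S := by
      calc ∑ k : Fin T, ξ k * x (α k)
          ≤ ∑ _k : Fin T, S := Finset.sum_le_sum fun k _ =>
            Finset.le_sup' (fun k : Fin T => ξ k * x (α k)) (Finset.mem_univ k)
        _ = (T:ℝ) * S := by simp [Finset.sum_const, Finset.card_univ, nsmul_eq_mul]
    have hTT : Real.sqrt T * Real.sqrt T = (T:ℝ) := Real.mul_self_sqrt hN.le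
    have hsq : 0 < Real.sqrt T := Real.sqrt_pos.mpr hN
    have hSb : -(‖x‖ / Real.sqrt T) ≤ S := by
      have hEq : ‖x‖ / Real.sqrt T = Real.sqrt T * ‖x‖ / (T:ℝ) := by
        rw [div_eq_div_iff hsq.ne' hN.ne', mul_comm (Real.sqrt T) ‖x‖, mul_assoc, hTT]
      rw [hEq, ← neg_div, div_le_iff₀ hN]
      have := hlow.trans hsupS
      linarith
    have hb : 0 < β / Real.sqrt T := by positivity
    have young := young_aux (σ := σ) (b := β / Real.sqrt T) (r := ‖x‖) hq1 hσ hb (norm_nonneg x)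
    have hbq : (β / Real.sqrt T) ^ q / σ = β ^ q / (σ * (T:ℝ) ^ (q/2)) := by
      rw [Real.div_rpow hβ.le (Real.sqrt_nonneg _), hsT, div_div]
      ring_nf
    rw [hbq] at young
    have h5 : -(β / Real.sqrt T * ‖x‖) ≤ β * S := by
      calc -(β / Real.sqrt T * ‖x‖) = β * (-(‖x‖ / Real.sqrt T)) := by ring
        _ ≤ β * S := mul_le_mul_of_nonneg_left hSb hβ.le
    linarith
end

section
/- Let y ∈ ℝ^{T̃} with y_1 ≥ ⋯ ≥ y_{T̃} ≥ 0, let r > 1, γ > 0, c > 0, and suppose y_t ≥ y_1 − (t−1)γ^{1/r} for all t, Σ_{i=1}^{T̃} y_i = γ/c, and T̃ = ⌊ y_1/γ^{1/r} + 1 ⌋. Then y_1 ≤ γ^{1/r} + √(2 γ^{(r+1)/r} / c). -/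
open Real Set Finset

lemma aux_icc_sum (T : ℕ) : ∑ t ∈ Finset.Icc 1 T, ((t:ℝ) - 1) = T * (T - 1) / 2 := by
  induction T with
  | zero => simp
  | succ n ih =>
    rw [Finset.sum_Icc_succ_top (by omega), ih]
    push_cast
    ring

/-- with `Σ y_i = γ/c`, `y_t ≥ y_1 − (t−1)γ^{1/r}` and
`T̃ = ⌊y_1/γ^{1/r} + 1⌋`, one gets `y_1 ≤ γ^{1/r} + √(2 γ^{(r+1)/r} / c)`. -/
theorem first_coordinate_upper_bound (r γ c : ℝ) (hr : 1 < r) (hγ : 0 < γ) (hc : 0 < c)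
    (T : ℕ) (hT : 1 ≤ T) (y : ℕ → ℝ)
    (hsorted : ∀ i j, 1 ≤ i → i ≤ j → j ≤ T → y j ≤ y i)
    (hnonneg : 0 ≤ y T)
    (hlb : ∀ t, 1 ≤ t → t ≤ T → y t ≥ y 1 - ((t : ℝ) - 1) * γ ^ (1 / r))
    (hsum : ∑ i ∈ Finset.Icc 1 T, y i = γ / c)
    (hTdef : T = ⌊y 1 / γ ^ (1 / r) + 1⌋₊) :
    y 1 ≤ γ ^ (1 / r) + Real.sqrt (2 * γ ^ ((r + 1) / r) / c) := by
  set g := γ ^ (1 / r) with hgdef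
  have hg : 0 < g := Real.rpow_pos_of_pos hγ _
  have hy1 : 0 ≤ y 1 := le_trans hnonneg (hsorted 1 T le_rfl hT le_rfl)
  have hx : 0 ≤ y 1 / g + 1 := by positivity
  have hTle : (T : ℝ) ≤ y 1 / g + 1 := by
    rw [hTdef]; exact Nat.floor_le hx
  have hTgt : y 1 / g < (T : ℝ) := by
    have := Nat.lt_floor_add_one (y 1 / g + 1)
    rw [← hTdef] at this
    linarith
  -- key inequalities without division
  have hB : g * ((T : ℝ) - 1) ≤ y 1 := by
    have h2 : ((T : ℝ) - 1) * g ≤ (y 1 / g) * g :=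
      mul_le_mul_of_nonneg_right (by linarith) hg.le
    rw [div_mul_cancel₀ _ hg.ne'] at h2
    linarith
  have hC : y 1 ≤ g * (T : ℝ) := by
    have := (div_lt_iff₀ hg).mp hTgt
    linarith
  -- sum lower bound
  have hsum_ge : γ / c ≥ ∑ t ∈ Finset.Icc 1 T, (y 1 - ((t : ℝ) - 1) * g) := by
    rw [← hsum]
    apply Finset.sum_le_sum
    intro t ht
    rw [Finset.mem_Icc] at ht
    exact hlb t ht.1 ht.2
  have hcalc : ∑ t ∈ Finset.Icc 1 T, (y 1 - ((t : ℝ) - 1) * g)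
      = (T : ℝ) * y 1 - g * ((T : ℝ) * ((T : ℝ) - 1) / 2) := by
    rw [Finset.sum_sub_distrib, ← Finset.sum_mul, aux_icc_sum]
    simp [Nat.card_Icc]
    ring
  rw [hcalc] at hsum_ge
  have hTpos : (0:ℝ) < (T : ℝ) := by exact_mod_cast hT
  have hsq : y 1 ^ 2 ≤ 2 * g * (γ / c) := by
    nlinarith [mul_nonneg (mul_nonneg hg.le hTpos.le) (by linarith : (0:ℝ) ≤ y 1 - g * ((T:ℝ) - 1)),
      mul_nonneg (by linarith : (0:ℝ) ≤ g * (T:ℝ) - y 1) hy1]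
  have hpow : γ ^ ((r + 1) / r) = γ * g := by
    have hr0 : r ≠ 0 := by linarith
    have : (r + 1) / r = 1 + 1 / r := by field_simp
    rw [this, Real.rpow_add hγ, Real.rpow_one, hgdef]
  have h2 : 2 * γ ^ ((r + 1) / r) / c = 2 * g * (γ / c) := by
    rw [hpow]; ring
  rw [h2]
  have : y 1 ≤ Real.sqrt (2 * g * (γ / c)) := by
    rw [show y 1 = Real.sqrt (y 1 ^ 2) from (Real.sqrt_sq hy1).symm]
    exact Real.sqrt_le_sqrt hsq
  linarith
end
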